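/- Weak Ginsburg–Sands theorem (classical form): every infinite topological space has an infinite subset Y such that the subspace topology on Y is either indiscrete (the only open subsets of Y are ∅ and Y), or homeomorphic to ℕ with the initial segment topology, or homeomorphic to ℕ with the final segment topology, or T₁. -/

import Mathlib

/-- The initial segment topology on ℕ: generated by the sets `Set.Iic n`;
its open sets are exactly `∅`, `ℕ`, and the intervals `[0,n]`. -/
def initialSegTop : TopologicalSpace ℕ :=
  TopologicalSpace.generateFrom {s | ∃ n : ℕ, s = Set.Iic n}

/-- The final segment topology on ℕ: generated by the sets `Set.Ici n`;
its open sets are exactly `∅`, `ℕ`, and the intervals `[n,∞)`. -/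
def finalSegTop : TopologicalSpace ℕ :=
  TopologicalSpace.generateFrom {s | ∃ n : ℕ, s = Set.Ici n}

/-- The cofinite topology on ℕ: the open sets are `∅` and the sets with finite complement. -/
def cofiniteTop : TopologicalSpace ℕ where
  IsOpen s := s = ∅ ∨ sᶜ.Finite
  isOpen_univ := Or.inr (by simp)
  isOpen_inter s t hs ht := by
    rcases hs with rfl | hs
    · exact Or.inl (Set.empty_inter t)
    rcases ht with rfl | ht
    · exact Or.inl (Set.inter_empty s)
    · right
      rw [Set.compl_inter]
      exact hs.union ht
  isOpen_sUnion S hS := by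
    by_cases h : ∀ s ∈ S, s = ∅
    · exact Or.inl (Set.sUnion_eq_empty.mpr h)
    · push_neg at h
      obtain ⟨s, hsS, hsne⟩ := h
      rcases hS s hsS with rfl | hfin
      · simpa using hsne
      · exact Or.inr (hfin.subset (Set.compl_subset_compl.mpr (Set.subset_sUnion_of_mem hsS)))

/-- Infinite Ramsey theorem for pairs, with 3 colours. -/
lemma ramsey3 (C : ℕ → ℕ → Fin 3) :
    ∃ (φ : ℕ → ℕ) (c : Fin 3), StrictMono φ ∧ ∀ i j, i < j → C (φ i) (φ j) = c := by
  classical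
  set U := Filter.hyperfilter ℕ with hUdef
  have h3 : ∀ v : Fin 3, v = 0 ∨ v = 1 ∨ v = 2 := by decide
  have key : ∀ g : ℕ → Fin 3, ∃ c, {x | g x = c} ∈ U := by
    intro g
    have hcover : {x | g x = 0} ∪ ({x | g x = 1} ∪ {x | g x = 2}) ∈ U := by
      have : {x | g x = 0} ∪ ({x | g x = 1} ∪ {x | g x = 2}) = Set.univ := by
        ext x
        simpa using h3 (g x)
      rw [this]; exact Filter.univ_mem
    rcases Ultrafilter.union_mem_iff.mp hcover with h | h
    · exact ⟨0, h⟩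
    rcases Ultrafilter.union_mem_iff.mp h with h | h
    · exact ⟨1, h⟩
    · exact ⟨2, h⟩
  have row : ∀ a : ℕ, ∃ c, {x | C a x = c} ∈ U := fun a => key (C a)
  choose c0 hc0 using row
  obtain ⟨c, hc⟩ := key c0
  have hmain : ∀ s : Finset ℕ, (∀ x ∈ s, c0 x = c) →
      ∃ y, c0 y = c ∧ ∀ x ∈ s, x < y ∧ C x y = c := by
    intro s hs
    have h1 : {a | c0 a = c} ∈ U := hc
    have h2 : (⋂ x ∈ s, {z | C x z = c}) ∈ U := by
      refine (Filter.biInter_finset_mem s).mpr ?_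
      intro x hx
      have := hc0 x
      rwa [hs x hx] at this
    have h3' : {z : ℕ | ∀ x ∈ s, x < z} ∈ U := by
      apply Filter.hyperfilter_le_cofinite
      rw [Filter.mem_cofinite]
      apply (Set.finite_Iic (s.sup id)).subset
      intro z hz
      simp only [Set.mem_compl_iff, Set.mem_setOf_eq, not_forall] at hz
      obtain ⟨x, hxs, hxz⟩ := hz
      exact Set.mem_Iic.mpr (le_trans (Nat.le_of_not_lt hxz) (Finset.le_sup (f := id) hxs))
    obtain ⟨y, hy1, hy2, hy3⟩ :=
      Ultrafilter.nonempty_of_mem (Filter.inter_mem h1 (Filter.inter_mem h2 h3'))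
    exact ⟨y, hy1, fun x hx => ⟨hy3 x hx, Set.mem_iInter₂.mp hy2 x hx⟩⟩
  obtain ⟨f, _, hfr⟩ :=
    exists_seq_of_forall_finset_exists (fun a => c0 a = c)
      (fun x y => x < y ∧ C x y = c) hmain
  exact ⟨f, c, fun m n h => (hfr m n h).1, fun i j h => (hfr i j h).2⟩

lemma downclosed_cases {D : Set ℕ} (hD : ∀ m n, m ≤ n → n ∈ D → m ∈ D) :
    D = ∅ ∨ D = Set.univ ∨ ∃ n, D = Set.Iic n := by
  rcases D.eq_empty_or_nonempty with h | h
  · exact Or.inl h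
  by_cases hb : BddAbove D
  · refine Or.inr (Or.inr ⟨sSup D, ?_⟩)
    ext k
    exact ⟨fun hk => le_csSup hb hk, fun hk => hD k (sSup D) hk (Nat.sSup_mem h hb)⟩
  · refine Or.inr (Or.inl ?_)
    ext k
    simp only [Set.mem_univ, iff_true]
    rcases not_bddAbove_iff.mp hb k with ⟨n, hnD, hkn⟩
    exact hD k n hkn.le hnD

lemma upclosed_cases {D : Set ℕ} (hD : ∀ m n, m ≤ n → m ∈ D → n ∈ D) :
    D = ∅ ∨ ∃ n, D = Set.Ici n := by
  rcases D.eq_empty_or_nonempty with h | h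
  · exact Or.inl h
  refine Or.inr ⟨sInf D, ?_⟩
  ext k
  exact ⟨fun hk => Nat.sInf_le hk, fun hk => hD _ _ hk (Nat.sInf_mem h)⟩

lemma homeo_init {X : Type*} [TopologicalSpace X] (w : ℕ → X) (winj : Function.Injective w)
    (keyA : ∀ n : ℕ, ∃ U : Set X, IsOpen U ∧ w ⁻¹' U = Set.Iic n)
    (keyB : ∀ U : Set X, IsOpen U →
      w ⁻¹' U = ∅ ∨ w ⁻¹' U = Set.univ ∨ ∃ n, w ⁻¹' U = Set.Iic n) :
    Nonempty (@Homeomorph (Set.range w) ℕ _ initialSegTop) := by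
  classical
  set e : ℕ ≃ Set.range w := Equiv.ofInjective w winj with he
  have hval : ∀ k : ℕ, ((e k : X)) = w k := fun k => rfl
  have hval' : ∀ y : Set.range w, (y : X) = w (e.symm y) := by
    intro y
    conv_lhs => rw [← e.apply_symm_apply y]
    exact hval _
  refine ⟨@Homeomorph.mk _ _ _ initialSegTop e.symm ?_ ?_⟩
  · show @Continuous _ _ _ (TopologicalSpace.generateFrom {s | ∃ n : ℕ, s = Set.Iic n}) e.symm
    rw [continuous_generateFrom_iff]
    rintro s ⟨n, rfl⟩
    have hs : ⇑e.symm ⁻¹' Set.Iic n = Subtype.val ⁻¹' (keyA n).choose := by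
      ext y
      have h1 := (keyA n).choose_spec.2
      simp only [Set.mem_preimage, Set.mem_Iic]
      rw [hval' y, ← Set.mem_preimage, h1, Set.mem_Iic]
    rw [hs]
    exact (keyA n).choose_spec.1.preimage continuous_subtype_val
  · rw [@continuous_def _ _ initialSegTop _]
    intro V hV
    obtain ⟨U, hU, rfl⟩ := isOpen_induced_iff.mp hV
    have hpre : e.symm.invFun ⁻¹' (Subtype.val ⁻¹' U) = w ⁻¹' U := rfl
    rw [hpre]
    rcases keyB U hU with h | h | ⟨n, h⟩ <;> rw [h]
    · exact @isOpen_empty _ initialSegTop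
    · exact @isOpen_univ _ initialSegTop
    · exact TopologicalSpace.GenerateOpen.basic _ ⟨n, rfl⟩

lemma homeo_final {X : Type*} [TopologicalSpace X] (w : ℕ → X) (winj : Function.Injective w)
    (keyA : ∀ n : ℕ, ∃ U : Set X, IsOpen U ∧ w ⁻¹' U = Set.Ici n)
    (keyB : ∀ U : Set X, IsOpen U → w ⁻¹' U = ∅ ∨ ∃ n, w ⁻¹' U = Set.Ici n) :
    Nonempty (@Homeomorph (Set.range w) ℕ _ finalSegTop) := by
  classical
  set e : ℕ ≃ Set.range w := Equiv.ofInjective w winj with he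
  have hval : ∀ k : ℕ, ((e k : X)) = w k := fun k => rfl
  have hval' : ∀ y : Set.range w, (y : X) = w (e.symm y) := by
    intro y
    conv_lhs => rw [← e.apply_symm_apply y]
    exact hval _
  refine ⟨@Homeomorph.mk _ _ _ finalSegTop e.symm ?_ ?_⟩
  · show @Continuous _ _ _ (TopologicalSpace.generateFrom {s | ∃ n : ℕ, s = Set.Ici n}) e.symm
    rw [continuous_generateFrom_iff]
    rintro s ⟨n, rfl⟩
    have hs : ⇑e.symm ⁻¹' Set.Ici n = Subtype.val ⁻¹' (keyA n).choose := by
      ext y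
      have h1 := (keyA n).choose_spec.2
      simp only [Set.mem_preimage, Set.mem_Ici]
      rw [hval' y, ← Set.mem_preimage, h1, Set.mem_Ici]
    rw [hs]
    exact (keyA n).choose_spec.1.preimage continuous_subtype_val
  · rw [@continuous_def _ _ finalSegTop _]
    intro V hV
    obtain ⟨U, hU, rfl⟩ := isOpen_induced_iff.mp hV
    have hpre : e.symm.invFun ⁻¹' (Subtype.val ⁻¹' U) = w ⁻¹' U := rfl
    rw [hpre]
    rcases keyB U hU with h | ⟨n, h⟩ <;> rw [h]
    · exact @isOpen_empty _ finalSegTop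
    · exact TopologicalSpace.GenerateOpen.basic _ ⟨n, rfl⟩

lemma indiscrete_of {X : Type*} [TopologicalSpace X] (w : ℕ → X)
    (keyB : ∀ U : Set X, IsOpen U → w ⁻¹' U = ∅ ∨ w ⁻¹' U = Set.univ) :
    ∀ V : Set (Set.range w), IsOpen V → V = ∅ ∨ V = Set.univ := by
  intro V hV
  obtain ⟨U, hU, rfl⟩ := isOpen_induced_iff.mp hV
  rcases keyB U hU with h | h
  · left
    ext y
    obtain ⟨k, hk⟩ := y.2
    simp only [Set.mem_preimage, Set.mem_empty_iff_false, iff_false]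
    intro hy
    have : k ∈ w ⁻¹' U := by rw [Set.mem_preimage, hk]; exact hy
    rw [h] at this
    exact this
  · right
    ext y
    obtain ⟨k, hk⟩ := y.2
    simp only [Set.mem_preimage, Set.mem_univ, iff_true]
    have : k ∈ w ⁻¹' U := by rw [h]; trivial
    rw [Set.mem_preimage, hk] at this
    exact this

/-- **Weak Ginsburg–Sands theorem** (classical form): every infinite topological space has an
infinite subset `Y` whose subspace topology is indiscrete (the only open subsets of `Y` are
`∅` and `Y`), or homeomorphic to ℕ with the initial segment topology, or homeomorphic to ℕ
with the final segment topology, or T₁. -/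
theorem weak_ginsburg_sands {X : Type*} [TopologicalSpace X] [Infinite X] :
    ∃ Y : Set X, Y.Infinite ∧
      ((∀ V : Set Y, IsOpen V → V = ∅ ∨ V = Set.univ) ∨
       Nonempty (@Homeomorph Y ℕ _ initialSegTop) ∨
       Nonempty (@Homeomorph Y ℕ _ finalSegTop) ∨
       T1Space Y) := by
  classical
  obtain u := Infinite.natEmbedding X
  set C : ℕ → ℕ → Fin 3 :=
    fun i j => if u i ⤳ u j then 0 else if u j ⤳ u i then 1 else 2 with hC
  obtain ⟨φ, c, hφ, hcol⟩ := ramsey3 C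
  set v : ℕ → X := fun n => u (φ n) with hv
  have vinj : Function.Injective v := fun a b hab => hφ.injective (u.injective hab)
  have h3 : c = 0 ∨ c = 1 ∨ c = 2 := by omega
  rcases h3 with hc | hc | hc
  · -- increasing chain: v i ⤳ v j for i ≤ j
    have hchain : ∀ i j : ℕ, i ≤ j → v i ⤳ v j := by
      intro i j hij
      rcases eq_or_lt_of_le hij with rfl | h
      · exact specializes_refl _
      · have hcij := hcol i j h
        rw [hc] at hcij
        by_contra hns
        rw [hC] at hcij
        simp only [hv, if_neg hns] at hcij
        split_ifs at hcij with h1 h2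
        · exact hns h1
        · exact absurd hcij (by decide)
        · exact absurd hcij (by decide)
    have hdc : ∀ U : Set X, IsOpen U → ∀ m n, m ≤ n → n ∈ v ⁻¹' U → m ∈ v ⁻¹' U :=
      fun U hU m n h hn => (hchain m n h).mem_open hU hn
    set S : Set ℕ := {n | ∃ U : Set X, IsOpen U ∧ v ⁻¹' U = Set.Iic n} with hS
    by_cases hSi : S.Infinite
    · -- homeomorphic to initial segment topology
      set ψ : ℕ → ℕ := Nat.nth (· ∈ S) with hψdef
      have hψ : StrictMono ψ := Nat.nth_strictMono hSi
      set w : ℕ → X := fun k => v (ψ k) with hw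
      have winj : Function.Injective w := fun a b hab => hψ.injective (vinj hab)
      refine ⟨Set.range w, Set.infinite_range_of_injective winj, Or.inr (Or.inl ?_)⟩
      apply homeo_init w winj
      · intro n
        have hmem : ψ n ∈ S := Nat.nth_mem_of_infinite hSi n
        obtain ⟨U, hU, hUI⟩ := hmem
        refine ⟨U, hU, ?_⟩
        ext k
        simp only [Set.mem_preimage, hw]
        rw [← Set.mem_preimage, hUI, Set.mem_Iic, Set.mem_Iic, hψ.le_iff_le]
      · intro U hU
        apply downclosed_cases
        intro m n hmn hn
        exact hdc U hU (ψ m) (ψ n) (hψ.monotone hmn) hn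
    · -- indiscrete tail
      obtain ⟨N, hN⟩ := (Set.not_infinite.mp hSi).bddAbove
      set w : ℕ → X := fun k => v (k + N + 1) with hw
      have winj : Function.Injective w := fun a b hab => by
        have := vinj hab; omega
      refine ⟨Set.range w, Set.infinite_range_of_injective winj, Or.inl ?_⟩
      apply indiscrete_of w
      intro U hU
      rcases downclosed_cases (hdc U hU) with h | h | ⟨n, h⟩
      · left
        ext k
        simp only [Set.mem_preimage, hw, Set.mem_empty_iff_false, iff_false]
        intro hk
        have : k + N + 1 ∈ v ⁻¹' U := hk
        rw [h] at this
        exact this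
      · right
        ext k
        simp only [Set.mem_preimage, hw, Set.mem_univ, iff_true]
        have : k + N + 1 ∈ v ⁻¹' U := by rw [h]; trivial
        exact this
      · left
        have hnS : n ∈ S := ⟨U, hU, h⟩
        have hnN : n ≤ N := hN hnS
        ext k
        simp only [Set.mem_preimage, hw, Set.mem_empty_iff_false, iff_false]
        intro hk
        have : k + N + 1 ∈ v ⁻¹' U := hk
        rw [h, Set.mem_Iic] at this
        omega
  · -- decreasing chain: v j ⤳ v i for i ≤ j
    have hchain : ∀ i j : ℕ, i ≤ j → v j ⤳ v i := by
      intro i j hij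
      rcases eq_or_lt_of_le hij with rfl | h
      · exact specializes_refl _
      · have hcij := hcol i j h
        rw [hc] at hcij
        by_contra hns
        rw [hC] at hcij
        simp only [hv] at hcij hns
        rw [if_neg (by
          intro hspec
          rw [if_pos hspec] at hcij
          exact absurd hcij (by decide)), if_neg hns] at hcij
        exact absurd hcij (by decide)
    have hdc : ∀ U : Set X, IsOpen U → ∀ m n, m ≤ n → m ∈ v ⁻¹' U → n ∈ v ⁻¹' U :=
      fun U hU m n h hm => (hchain m n h).mem_open hU hm
    set S : Set ℕ := {n | ∃ U : Set X, IsOpen U ∧ v ⁻¹' U = Set.Ici n} with hS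
    by_cases hSi : S.Infinite
    · -- homeomorphic to final segment topology
      set ψ : ℕ → ℕ := Nat.nth (· ∈ S) with hψdef
      have hψ : StrictMono ψ := Nat.nth_strictMono hSi
      set w : ℕ → X := fun k => v (ψ k) with hw
      have winj : Function.Injective w := fun a b hab => hψ.injective (vinj hab)
      refine ⟨Set.range w, Set.infinite_range_of_injective winj, Or.inr (Or.inr (Or.inl ?_))⟩
      apply homeo_final w winj
      · intro n
        have hmem : ψ n ∈ S := Nat.nth_mem_of_infinite hSi n
        obtain ⟨U, hU, hUI⟩ := hmem
        refine ⟨U, hU, ?_⟩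
        ext k
        simp only [Set.mem_preimage, hw]
        rw [← Set.mem_preimage, hUI, Set.mem_Ici, Set.mem_Ici, hψ.le_iff_le]
      · intro U hU
        apply upclosed_cases
        intro m n hmn hm
        exact hdc U hU (ψ m) (ψ n) (hψ.monotone hmn) hm
    · -- indiscrete tail
      obtain ⟨N, hN⟩ := (Set.not_infinite.mp hSi).bddAbove
      set w : ℕ → X := fun k => v (k + N + 1) with hw
      have winj : Function.Injective w := fun a b hab => by
        have := vinj hab; omega
      refine ⟨Set.range w, Set.infinite_range_of_injective winj, Or.inl ?_⟩
      apply indiscrete_of w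
      intro U hU
      rcases upclosed_cases (hdc U hU) with h | ⟨n, h⟩
      · left
        ext k
        simp only [Set.mem_preimage, hw, Set.mem_empty_iff_false, iff_false]
        intro hk
        have : k + N + 1 ∈ v ⁻¹' U := hk
        rw [h] at this
        exact this
      · right
        have hnS : n ∈ S := ⟨U, hU, h⟩
        have hnN : n ≤ N := hN hnS
        ext k
        simp only [Set.mem_preimage, hw, Set.mem_univ, iff_true]
        have : k + N + 1 ∈ v ⁻¹' U := by
          rw [h, Set.mem_Ici]; omega
        exact this
  · -- antichain: T₁
    refine ⟨Set.range v, Set.infinite_range_of_injective vinj, Or.inr (Or.inr (Or.inr ?_))⟩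
    rw [t1Space_iff_specializes_imp_eq]
    rintro ⟨a, i, rfl⟩ ⟨b, j, rfl⟩ hab
    have hspec : v i ⤳ v j := hab.map continuous_subtype_val
    have hnot : ∀ p q : ℕ, p < q → ¬ v p ⤳ v q ∧ ¬ v q ⤳ v p := by
      intro p q hpq
      have hcpq := hcol p q hpq
      rw [hc, hC] at hcpq
      simp only [hv] at hcpq
      constructor
      · intro hs
        rw [if_pos hs] at hcpq
        exact absurd hcpq (by decide)
      · intro hs
        rw [if_neg (by
          intro hs'
          rw [if_pos hs'] at hcpq
          exact absurd hcpq (by decide)), if_pos hs] at hcpq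
        exact absurd hcpq (by decide)
    rcases lt_trichotomy i j with h | h | h
    · exact absurd hspec (hnot i j h).1
    · subst h; rfl
    · exact absurd hspec (hnot j i h).2
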